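/- arXiv:1502.06153 — 9 statements merged into one kernel-verified Lean document; each statement's English description precedes it below -/
import Mathlib

section
/- Let Γ be a discrete group acting continuously on a compact, zero-dimensional (totally disconnected) metrizable space X, and let β denote the induced action on C(X;ℤ), given by β_s(f)(x) = f(s⁻¹.x). Then the action on X is minimal (there is no closed subset Y with ∅ ≠ Y ⊊ X and s.Y = Y for every s ∈ Γ) if and only if for every nonzero f ∈ C(X;ℤ) with f ≥ 0 there exist finitely many elements t₁,…,t_n ∈ Γ such that β_{t₁}(f) + ⋯ + β_{t_n}(f) ≥ 1_X, where 1_X is the constant function 1 and the order on C(X;ℤ) is pointwise. -/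
open Pointwise

/-- For a continuous action of a discrete group `Γ` on a compact,
zero-dimensional metrizable space `X`, with induced action `β` on `C(X; ℤ)` given by
`β_s(f)(x) = f(s⁻¹ • x)`, the action on `X` is minimal if and only if for every nonzero
nonnegative `f ∈ C(X; ℤ)` there are `t₁, …, t_n ∈ Γ` with `β_{t₁}(f) + ⋯ + β_{t_n}(f) ≥ 1`. -/
theorem minimal_iff_K_theoretic_filling {Γ X : Type*} [Group Γ] [TopologicalSpace X]
    [CompactSpace X] [T2Space X] [TotallyDisconnectedSpace X]
    [TopologicalSpace.MetrizableSpace X] [MulAction Γ X]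
    (hc : ∀ s : Γ, Continuous fun x : X => s • x)
    (β : Γ → C(X, ℤ) → C(X, ℤ)) (hβ : ∀ (s : Γ) (f : C(X, ℤ)) (x : X), β s f x = f (s⁻¹ • x)) :
    (¬ ∃ Y : Set X, IsClosed Y ∧ Y.Nonempty ∧ Y ≠ Set.univ ∧ ∀ s : Γ, s • Y = Y) ↔
      (∀ f : C(X, ℤ), f ≠ 0 → (∀ x : X, 0 ≤ f x) →
        ∃ (n : ℕ) (t : Fin n → Γ), ∀ x : X, 1 ≤ (∑ j, β (t j) f) x) := by
  constructor
  · intro hmin f hf hpos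
    set U : Set X := {x | f x ≠ 0} with hU
    have hUopen : IsOpen U := by
      have : U = f ⁻¹' ({0}ᶜ) := rfl
      rw [this]
      exact (isOpen_discrete _).preimage f.continuous
    obtain ⟨x₀, hx₀⟩ : ∃ x, f x ≠ 0 := by
      by_contra h
      push_neg at h
      exact hf (ContinuousMap.ext fun x => h x)
    -- each s • U is open
    have hsmul_mem : ∀ (s : Γ) (x : X), x ∈ s • U ↔ s⁻¹ • x ∈ U := by
      intro s x
      exact Set.mem_smul_set_iff_inv_smul_mem
    have hopen : ∀ s : Γ, IsOpen (s • U) := by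
      intro s
      have : s • U = (fun x : X => s⁻¹ • x) ⁻¹' U := by
        ext x; exact hsmul_mem s x
      rw [this]
      exact hUopen.preimage (hc s⁻¹)
    -- the orbit of U covers X
    have hcover : (Set.univ : Set X) ⊆ ⋃ s : Γ, s • U := by
      by_contra hcov
      have hY : ((⋃ s : Γ, s • U)ᶜ : Set X).Nonempty := by
        rw [Set.nonempty_compl]
        intro h
        exact hcov (h.symm.subset)
      refine hmin ⟨(⋃ s : Γ, s • U)ᶜ, (isOpen_iUnion hopen).isClosed_compl, hY, ?_, ?_⟩
      · intro h
        have : x₀ ∈ (⋃ s : Γ, s • U)ᶜ := h.symm ▸ Set.mem_univ x₀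
        exact this (Set.mem_iUnion.2 ⟨1, by simpa using (hsmul_mem 1 x₀).2 (by rw [inv_one, one_smul]; exact hx₀)⟩)
      · intro s
        ext x
        rw [Set.mem_smul_set_iff_inv_smul_mem]
        simp only [Set.mem_compl_iff, Set.mem_iUnion, not_exists]
        constructor
        · intro h t hxt
          refine h (s⁻¹ * t) ?_
          rw [hsmul_mem] at hxt ⊢
          rw [mul_inv_rev, inv_inv, mul_smul, smul_inv_smul]
          exact hxt
        · intro h t hxt
          refine h (s * t) ?_
          rw [hsmul_mem] at hxt ⊢
          rw [mul_inv_rev, mul_smul]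
          exact hxt
    obtain ⟨T, hT⟩ := isCompact_univ.elim_finite_subcover (fun s : Γ => s • U) hopen hcover
    refine ⟨T.card, fun j => T.equivFin.symm j, fun x => ?_⟩
    obtain ⟨s, hsT, hxs⟩ : ∃ s ∈ T, x ∈ s • U := by
      have := hT (Set.mem_univ x)
      simpa using this
    rw [ContinuousMap.sum_apply]
    have hterm : ∀ j : Fin T.card, 0 ≤ β (T.equivFin.symm j : Γ) f x := by
      intro j; rw [hβ]; exact hpos _
    have hone : 1 ≤ β (T.equivFin.symm (T.equivFin ⟨s, hsT⟩) : Γ) f x := by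
      rw [Equiv.symm_apply_apply, hβ]
      have : s⁻¹ • x ∈ U := (hsmul_mem s x).1 hxs
      have h0 : f (s⁻¹ • x) ≠ 0 := this
      have h1 := hpos (s⁻¹ • x)
      show 1 ≤ f (s⁻¹ • x)
      omega
    exact hone.trans (Finset.single_le_sum (fun j _ => hterm j) (Finset.mem_univ _))
  · intro hfill hex
    obtain ⟨Y, hYc, ⟨y₀, hy₀⟩, hYne, hYinv⟩ := hex
    obtain ⟨x₀, hx₀⟩ : ∃ x, x ∉ Y := by
      by_contra h
      push_neg at h
      exact hYne (Set.eq_univ_of_forall h)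
    obtain ⟨V, hV, hx₀V, hVY⟩ :=
      compact_exists_isClopen_in_isOpen hYc.isOpen_compl hx₀
    set f : C(X, ℤ) := ⟨Set.indicator V 1, continuous_indicator (by simp [hV.frontier_eq]) continuous_const.continuousOn⟩ with hfdef
    have hfx₀ : f x₀ = 1 := by simp [hfdef, Set.indicator_of_mem hx₀V]
    obtain ⟨n, t, ht⟩ := hfill f (fun h => by simp [h] at hfx₀)
      (fun x => by by_cases hx : x ∈ V <;> simp [hfdef, Set.indicator_apply, hx])
    have := ht y₀
    rw [ContinuousMap.sum_apply] at this
    have hzero : ∀ j : Fin n, β (t j) f y₀ = 0 := by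
      intro j
      rw [hβ]
      have hmem : (t j)⁻¹ • y₀ ∈ Y := by
        have := hYinv (t j)
        conv at hy₀ => rw [← this]
        obtain ⟨z, hz, hze⟩ := hy₀
        rwa [← hze, inv_smul_smul]
      have : (t j)⁻¹ • y₀ ∉ V := fun h => hVY h hmem
      simp [hfdef, Set.indicator_of_notMem this]
    simp [hzero] at this
end

section
/- Let M be a commutative monoid with the Riesz refinement property and let a group Γ act on M by monoid automorphisms t ↦ (x ↦ t·x). Define a relation on M by: x ∼ y if and only if there exist n ∈ ℕ, elements u₁,…,u_n ∈ M and t₁,…,t_n ∈ Γ with x = u₁ + ⋯ + u_n and y = t₁·u₁ + ⋯ + t_n·u_n. Then ∼ is an equivalence relation on M. -/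
/-- Equidecomposability with respect to an action of a group `Γ` on a commutative
monoid `M` by monoid automorphisms: `x ∼ y` iff `x = u₁ + ⋯ + u_n` and
`y = t₁·u₁ + ⋯ + t_n·u_n` for some `uⱼ ∈ M` and `tⱼ ∈ Γ`. -/
def MonoidEquidecomp {Γ M : Type*} [Group Γ] [AddCommMonoid M] [DistribMulAction Γ M]
    (x y : M) : Prop :=
  ∃ (n : ℕ) (u : Fin n → M) (t : Fin n → Γ), x = ∑ j, u j ∧ y = ∑ j, t j • u j

private lemma riesz_two_n {M : Type*} [AddCommMonoid M]
    (href : ∀ x₁ x₂ y₁ y₂ : M, x₁ + x₂ = y₁ + y₂ →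
      ∃ z₁₁ z₁₂ z₂₁ z₂₂ : M, x₁ = z₁₁ + z₁₂ ∧ x₂ = z₂₁ + z₂₂ ∧
        y₁ = z₁₁ + z₂₁ ∧ y₂ = z₁₂ + z₂₂) :
    ∀ (n : ℕ) (x y : M) (b : Fin (n + 1) → M), x + y = ∑ k, b k →
      ∃ p q : Fin (n + 1) → M, x = ∑ k, p k ∧ y = ∑ k, q k ∧ ∀ k, b k = p k + q k := by
  intro n
  induction n with
  | zero =>
    intro x y b h
    refine ⟨fun _ => x, fun _ => y, by simp, by simp, ?_⟩
    intro k
    have hk : k = 0 := by omega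
    subst hk
    simpa using h.symm
  | succ n ih =>
    intro x y b h
    rw [Fin.sum_univ_succ] at h
    obtain ⟨z₁₁, z₁₂, z₂₁, z₂₂, hx, hy, hb0, hrest⟩ := href x y (b 0) (∑ k, b (Fin.succ k)) h
    obtain ⟨p', q', hp', hq', hpq'⟩ := ih z₁₂ z₂₂ (fun k => b (Fin.succ k)) hrest.symm
    refine ⟨Fin.cons z₁₁ p', Fin.cons z₂₁ q', ?_, ?_, ?_⟩
    · rw [Fin.sum_univ_succ]; simpa [hp'] using hx
    · rw [Fin.sum_univ_succ]; simpa [hq'] using hy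
    · intro k
      refine Fin.cases ?_ ?_ k
      · simpa using hb0
      · intro i; simpa using hpq' i

private lemma riesz_m_n {M : Type*} [AddCommMonoid M]
    (href : ∀ x₁ x₂ y₁ y₂ : M, x₁ + x₂ = y₁ + y₂ →
      ∃ z₁₁ z₁₂ z₂₁ z₂₂ : M, x₁ = z₁₁ + z₁₂ ∧ x₂ = z₂₁ + z₂₂ ∧
        y₁ = z₁₁ + z₂₁ ∧ y₂ = z₁₂ + z₂₂) :
    ∀ (m n : ℕ) (a : Fin (m + 1) → M) (b : Fin (n + 1) → M), ∑ j, a j = ∑ k, b k →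
      ∃ c : Fin (m + 1) → Fin (n + 1) → M,
        (∀ j, a j = ∑ k, c j k) ∧ (∀ k, b k = ∑ j, c j k) := by
  intro m
  induction m with
  | zero =>
    intro n a b h
    refine ⟨fun _ => b, fun j => ?_, fun k => by simp⟩
    have hj : j = 0 := by omega
    subst hj
    simpa using h
  | succ m ih =>
    intro n a b h
    rw [Fin.sum_univ_succ] at h
    obtain ⟨p, q, hp, hq, hpq⟩ := riesz_two_n href n (a 0) (∑ j, a (Fin.succ j)) b h
    obtain ⟨c', hc'1, hc'2⟩ := ih n (fun j => a (Fin.succ j)) q hq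
    refine ⟨Fin.cons p c', ?_, ?_⟩
    · intro j
      refine Fin.cases ?_ ?_ j
      · simpa using hp
      · intro i; simpa using hc'1 i
    · intro k
      rw [Fin.sum_univ_succ]
      simp [hpq k, hc'2 k]

/-- If `M` is a commutative monoid with the Riesz refinement property and a
group `Γ` acts on `M` by monoid automorphisms, then equidecomposability is an equivalence
relation on `M`. -/
theorem equidecomp_equivalence {Γ M : Type*} [Group Γ] [AddCommMonoid M]
    [DistribMulAction Γ M]
    (href : ∀ x₁ x₂ y₁ y₂ : M, x₁ + x₂ = y₁ + y₂ →
      ∃ z₁₁ z₁₂ z₂₁ z₂₂ : M, x₁ = z₁₁ + z₁₂ ∧ x₂ = z₂₁ + z₂₂ ∧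
        y₁ = z₁₁ + z₂₁ ∧ y₂ = z₁₂ + z₂₂) :
    Equivalence (MonoidEquidecomp (Γ := Γ) (M := M)) := by
  constructor
  · intro x
    exact ⟨1, fun _ => x, fun _ => 1, by simp, by simp⟩
  · rintro x y ⟨n, u, t, hx, hy⟩
    refine ⟨n, fun j => t j • u j, fun j => (t j)⁻¹, hy, ?_⟩
    simpa [inv_smul_smul] using hx
  · rintro x y z ⟨m, u, t, hx, hy⟩ ⟨n, v, s, hy', hz⟩
    -- pad to nonempty index types
    set u' : Fin (m + 1) → M := Fin.cons 0 u with hu'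
    set t' : Fin (m + 1) → Γ := Fin.cons 1 t with ht'
    set v' : Fin (n + 1) → M := Fin.cons 0 v with hv'
    set s' : Fin (n + 1) → Γ := Fin.cons 1 s with hs'
    have hx' : x = ∑ j, u' j := by rw [Fin.sum_univ_succ]; simpa [hu'] using hx
    have hy1 : y = ∑ j, t' j • u' j := by
      rw [Fin.sum_univ_succ]; simpa [ht', hu'] using hy
    have hy2 : y = ∑ k, v' k := by rw [Fin.sum_univ_succ]; simpa [hv'] using hy'
    have hz' : z = ∑ k, s' k • v' k := by
      rw [Fin.sum_univ_succ]; simpa [hs', hv'] using hz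
    obtain ⟨c, hc1, hc2⟩ := riesz_m_n href m n (fun j => t' j • u' j) v' (hy1.symm.trans hy2)
    have hsum : ∀ F : Fin (m + 1) × Fin (n + 1) → M,
        ∑ j : Fin ((m + 1) * (n + 1)), F (finProdFinEquiv.symm j) = ∑ jk, F jk :=
      fun F => Fintype.sum_equiv finProdFinEquiv.symm _ _ (fun _ => rfl)
    refine ⟨(m + 1) * (n + 1),
      (fun jk : Fin (m + 1) × Fin (n + 1) => (t' jk.1)⁻¹ • c jk.1 jk.2) ∘
        finProdFinEquiv.symm,
      (fun jk : Fin (m + 1) × Fin (n + 1) => s' jk.2 * t' jk.1) ∘ finProdFinEquiv.symm,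
      ?_, ?_⟩
    · calc x = ∑ j, u' j := hx'
        _ = ∑ j, (t' j)⁻¹ • (t' j • u' j) := by simp [inv_smul_smul]
        _ = ∑ j, (t' j)⁻¹ • ∑ k, c j k := by
            refine Finset.sum_congr rfl fun j _ => by rw [← hc1 j]
        _ = ∑ j, ∑ k, (t' j)⁻¹ • c j k := by simp [Finset.smul_sum]
        _ = ∑ jk : Fin (m + 1) × Fin (n + 1), (t' jk.1)⁻¹ • c jk.1 jk.2 := by
            rw [Fintype.sum_prod_type]
        _ = _ := (hsum _).symm
    · have key : ∀ jk : Fin (m + 1) × Fin (n + 1),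
          (s' jk.2 * t' jk.1) • ((t' jk.1)⁻¹ • c jk.1 jk.2) = s' jk.2 • c jk.1 jk.2 := by
        intro jk; rw [mul_smul, smul_inv_smul]
      calc z = ∑ k, s' k • v' k := hz'
        _ = ∑ k, s' k • ∑ j, c j k := by
            refine Finset.sum_congr rfl fun k _ => by rw [← hc2 k]
        _ = ∑ k, ∑ j, s' k • c j k := by simp [Finset.smul_sum]
        _ = ∑ jk : Fin (m + 1) × Fin (n + 1), s' jk.2 • c jk.1 jk.2 := by
            rw [Fintype.sum_prod_type_right]
        _ = _ := by
            refine (Finset.sum_congr rfl fun jk _ => (key jk).symm).trans ?_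
            exact (hsum fun jk => (s' jk.2 * t' jk.1) • ((t' jk.1)⁻¹ • c jk.1 jk.2)).symm
end

section
/- Let M be a commutative monoid equipped with the algebraic order (a ≤ b iff there is c ∈ M with a + c = b) and let a group Γ act on M by monoid automorphisms. Define x ∼ y if and only if there exist n ∈ ℕ, elements u₁,…,u_n ∈ M and t₁,…,t_n ∈ Γ with x = Σ u_j and y = Σ t_j·u_j. Then for x ∈ M and integers k > l > 0 the following are equivalent: (i) x is (Γ,k,l)-paradoxical, i.e. there exist x₁,…,x_n ∈ M and t₁,…,t_n ∈ Γ with k·x ≤ x₁ + ⋯ + x_n and t₁·x₁ + ⋯ + t_n·x_n ≤ l·x; (ii) there exists z ∈ M with k·x + z ∼ l·x. -/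
/-- For a commutative monoid `M` with the algebraic order (`a ≤ b` iff
`a + c = b` for some `c`) and a group `Γ` acting by monoid automorphisms, an element `x`
is `(Γ,k,l)`-paradoxical (for integers `k > l > 0`) iff `k·x + z ∼ l·x` for some `z`. -/
theorem paradoxical_iff_equidecomp {Γ M : Type*} [Group Γ] [AddCommMonoid M]
    [DistribMulAction Γ M] (x : M) (k l : ℕ) (hlk : l < k) (hl : 0 < l) :
    (∃ (n : ℕ) (xs : Fin n → M) (t : Fin n → Γ),
      (∃ c : M, k • x + c = ∑ j, xs j) ∧ (∃ c : M, (∑ j, t j • xs j) + c = l • x)) ↔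
    (∃ z : M, MonoidEquidecomp (Γ := Γ) (k • x + z) (l • x)) := by
  constructor
  · rintro ⟨n, xs, t, ⟨c₁, hc₁⟩, ⟨c₂, hc₂⟩⟩
    refine ⟨c₁ + c₂, n + 1, Fin.cons c₂ xs, Fin.cons 1 t, ?_, ?_⟩
    · simp only [Fin.sum_univ_succ, Fin.cons_zero, Fin.cons_succ, ← hc₁]
      abel
    · rw [← hc₂]
      simp [Fin.sum_univ_succ, add_comm]
  · rintro ⟨z, n, u, t, h₁, h₂⟩
    exact ⟨n, u, t, ⟨z, h₁⟩, ⟨0, by rw [add_zero, ← h₂]⟩⟩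
end

section
/- Let (G, G⁺) be a partially ordered abelian group and let a group Γ act on G by order automorphisms β_t. Suppose β: G → ℝ is a group homomorphism which is positive (β(g) ≥ 0 for all g ∈ G⁺), Γ-invariant (β ∘ β_t = β for all t ∈ Γ), and faithful (β(x) > 0 for every nonzero x ∈ G⁺). Then no nonzero x ∈ G⁺ is (Γ,k,l)-paradoxical for any integers k > l > 0; that is, there do not exist x₁,…,x_n ∈ G⁺ and t₁,…,t_n ∈ Γ with x₁ + ⋯ + x_n ≥ k·x and β_{t₁}(x₁) + ⋯ + β_{t_n}(x_n) ≤ l·x. -/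
/-- Let `(G, G⁺)` be a partially ordered abelian group with a group `Γ`
acting by order automorphisms `β_t`, and let `φ : G → ℝ` be a positive, `Γ`-invariant,
faithful group homomorphism. Then no nonzero `x ∈ G⁺` is `(Γ,k,l)`-paradoxical for any
integers `k > l > 0`. -/
theorem no_paradoxical_of_faithful_invariant_hom {Γ G : Type*} [Group Γ] [AddCommGroup G]
    [PartialOrder G] [CovariantClass G G (· + ·) (· ≤ ·)]
    (β : Γ →* Multiplicative (AddAut G)) (hβpos : ∀ (t : Γ) (y : G), 0 ≤ y ↔ 0 ≤ Multiplicative.toAdd (β t) y)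
    (φ : G →+ ℝ) (hφpos : ∀ g : G, 0 ≤ g → 0 ≤ φ g)
    (hφinv : ∀ (t : Γ) (y : G), φ (Multiplicative.toAdd (β t) y) = φ y)
    (hφfaithful : ∀ x : G, 0 ≤ x → x ≠ 0 → 0 < φ x) :
    ∀ x : G, 0 ≤ x → x ≠ 0 → ∀ k l : ℕ, l < k → 0 < l →
      ¬ ∃ (n : ℕ) (xs : Fin n → G) (t : Fin n → Γ), (∀ j, 0 ≤ xs j) ∧
        k • x ≤ ∑ j, xs j ∧ (∑ j, Multiplicative.toAdd (β (t j)) (xs j)) ≤ l • x := by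
  intro x hx hx0 k l hlk hl ⟨n, xs, t, hxs, hk, hl2⟩
  have mono : ∀ a b : G, a ≤ b → φ a ≤ φ b := by
    intro a b hab
    have := hφpos (b - a) (by simpa using sub_nonneg.mpr hab)
    simpa [sub_nonneg] using this
  have h1 : (k : ℝ) * φ x ≤ φ (∑ j, xs j) := by
    have := mono _ _ hk
    simpa [map_nsmul, nsmul_eq_mul] using this
  have h2 : φ (∑ j, xs j) ≤ (l : ℝ) * φ x := by
    have := mono _ _ hl2
    simpa [map_sum, hφinv, nsmul_eq_mul] using this
  have hφx : 0 < φ x := hφfaithful x hx hx0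
  have : (k : ℝ) * φ x ≤ (l : ℝ) * φ x := h1.trans h2
  have hkl : (k : ℝ) ≤ l := le_of_mul_le_mul_right this hφx
  exact absurd (Nat.cast_le.mp hkl) (not_le.mpr hlk)
end

section
/- Let (W, +, ≤) be a preordered commutative monoid in which addition is compatible with the preorder (a ≤ b implies a + c ≤ b + c), and suppose W is almost unperforated: whenever n·x ≤ m·y for elements x, y ∈ W and positive integers n > m, then x ≤ y. If θ ∈ W satisfies (k+1)·θ ≤ k·θ for some positive integer k, then 2·θ ≤ θ, i.e. θ is properly infinite. -/
/-- In a preordered commutative monoid `W` in which addition is compatible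
with the preorder and which is almost unperforated, any element `θ` satisfying
`(k+1)·θ ≤ k·θ` for some positive integer `k` is properly infinite: `2·θ ≤ θ`. -/
theorem properlyInfinite_of_almostUnperforated {W : Type*} [AddCommMonoid W] [Preorder W]
    (hadd : ∀ a b c : W, a ≤ b → a + c ≤ b + c)
    (hunperf : ∀ (x y : W) (n m : ℕ), m < n → 0 < m → n • x ≤ m • y → x ≤ y)
    (θ : W) (k : ℕ) (hk : 0 < k) (h : (k + 1) • θ ≤ k • θ) :
    2 • θ ≤ θ := by
  have key : ∀ j : ℕ, (k + 1 + j) • θ ≤ k • θ := by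
    intro j
    induction j with
    | zero => simpa using h
    | succ n ih =>
      calc (k + 1 + (n + 1)) • θ = (k + 1 + n) • θ + θ := by
            rw [← add_assoc, add_smul, one_smul]
        _ ≤ k • θ + θ := hadd _ _ _ ih
        _ = (k + 1) • θ := by rw [add_smul, one_smul]
        _ ≤ k • θ := h
  have h2 : (k + 1) • (2 • θ) ≤ k • θ := by
    rw [smul_smul]
    have : (k + 1) * 2 = k + 1 + (k + 1) := by ring
    rw [this]
    exact key (k + 1)
  exact hunperf (2 • θ) θ (k + 1) k (Nat.lt_succ_self k) hk h2
end

section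
/- Let (W, +, ≤) be a preordered commutative monoid in which addition is compatible with the preorder, let a group Γ act on W by order-preserving monoid automorphisms (written t·x), let u ∈ W and let n be a positive integer. Assume: (a) transitivity: for all nonzero x, y ∈ W there exist a nonzero z ∈ W and t ∈ Γ with z ≤ x and t·z ≤ y; and (b) n-minimality: for every nonzero x ∈ W there exist t₁,…,t_n ∈ Γ with t₁·x + ⋯ + t_n·x ≥ u. Then the action is n-filling: for all nonzero x₁,…,x_n ∈ W there exist t₁,…,t_n ∈ Γ with t₁·x₁ + ⋯ + t_n·x_n ≥ u. -/
/-- Let `W` be a preordered commutative monoid with addition compatible with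
the preorder, with a group `Γ` acting by order-preserving monoid automorphisms, `u ∈ W`
and `n` a positive integer. If the action is (topologically) transitive and `n`-minimal,
then it is `n`-filling. -/
theorem nFilling_of_nMinimal {Γ W : Type*} [Group Γ] [AddCommMonoid W] [Preorder W]
    [DistribMulAction Γ W]
    (hadd : ∀ a b c : W, a ≤ b → a + c ≤ b + c)
    (hmono : ∀ (t : Γ) (a b : W), a ≤ b ↔ t • a ≤ t • b)
    (u : W) (n : ℕ) (hn : 0 < n)
    (htrans : ∀ x y : W, x ≠ 0 → y ≠ 0 → ∃ z : W, z ≠ 0 ∧ ∃ t : Γ, z ≤ x ∧ t • z ≤ y)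
    (hmin : ∀ x : W, x ≠ 0 → ∃ t : Fin n → Γ, u ≤ ∑ j, t j • x) :
    ∀ xs : Fin n → W, (∀ j, xs j ≠ 0) → ∃ t : Fin n → Γ, u ≤ ∑ j, t j • xs j := by
  -- sum monotonicity from hadd
  have hsum : ∀ m (f g : Fin m → W), (∀ j, f j ≤ g j) → ∑ j, f j ≤ ∑ j, g j := by
    intro m
    induction m with
    | zero => intro f g _; simp
    | succ k ih =>
      intro f g h
      rw [Fin.sum_univ_succ, Fin.sum_univ_succ]
      calc f 0 + ∑ j : Fin k, f j.succ ≤ g 0 + ∑ j : Fin k, f j.succ :=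
            hadd _ _ _ (h 0)
        _ ≤ g 0 + ∑ j : Fin k, g j.succ := by
            rw [add_comm (g 0), add_comm (g 0)]
            exact hadd _ _ _ (ih _ _ fun j => h j.succ)
  -- common minorant
  have aux : ∀ m (xs : Fin (m + 1) → W), (∀ j, xs j ≠ 0) →
      ∃ z : W, z ≠ 0 ∧ ∃ s : Fin (m + 1) → Γ, ∀ j, s j • z ≤ xs j := by
    intro m
    induction m with
    | zero =>
      intro xs h
      exact ⟨xs 0, h 0, fun _ => 1, fun j => by
        rw [Fin.fin_one_eq_zero j, one_smul]⟩
    | succ k ih =>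
      intro xs h
      obtain ⟨z, hz, s, hs⟩ := ih (fun j => xs j.castSucc) (fun j => h j.castSucc)
      obtain ⟨z', hz', t, hz'z, htz'⟩ := htrans z (xs (Fin.last _)) hz (h _)
      refine ⟨z', hz', Fin.lastCases t s, ?_⟩
      intro j
      refine Fin.lastCases ?_ ?_ j
      · simpa using htz'
      · intro i
        simp only [Fin.lastCases_castSucc]
        exact le_trans ((hmono (s i) _ _).mp hz'z) (hs i)
  intro xs hxs
  obtain ⟨m, rfl⟩ : ∃ m, n = m + 1 := ⟨n - 1, (Nat.succ_pred_eq_of_pos hn).symm⟩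
  obtain ⟨z, hz, s, hs⟩ := aux _ xs hxs
  obtain ⟨t, ht⟩ := hmin z hz
  refine ⟨fun j => t j * (s j)⁻¹, le_trans ht (hsum _ _ _ fun j => ?_)⟩
  have := (hmono (t j * (s j)⁻¹) _ _).mp (hs j)
  rwa [smul_smul, mul_assoc, inv_mul_cancel, mul_one] at this
end

section
/- Let A be a unital C*-algebra, Γ a discrete group, and α: Γ → Aut(A) an action by *-automorphisms. Then A has no α-invariant closed two-sided ideal I with (0) ≠ I ⊊ A if and only if for every nonzero positive element a ∈ A there exist m ∈ ℕ, group elements t₁,…,t_m ∈ Γ and elements z₁,…,z_m ∈ A such that z₁ α_{t₁}(a) z₁* + ⋯ + z_m α_{t_m}(a) z_m* ≥ 1, where 1 is the unit of A and ≥ is the order on self-adjoint elements given by the positive cone of A. -/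
section Aux

variable {A : Type*} [CStarAlgebra A] [PartialOrder A] [StarOrderedRing A]

/-- The key inequality: `x p y + y* p x* ≤ x p x* + y* p y` for `p ≥ 0`. -/
lemma key_ineq (p x y : A) (hp : 0 ≤ p) :
    x * p * y + star y * p * star x ≤ x * p * star x + star y * p * y := by
  set s := CFC.sqrt p with hs
  have hss : s * s = p := CFC.sqrt_mul_sqrt_self p hp
  have hsa : IsSelfAdjoint s := IsSelfAdjoint.of_nonneg (CFC.sqrt_nonneg p)
  have hst : star (x * s - star y * s) = s * star x - s * y := by
    simp [star_sub, star_mul, hsa.star_eq]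
  have h0 : 0 ≤ (x * s - star y * s) * (s * star x - s * y) := by
    rw [← hst]; exact mul_star_self_nonneg _
  have hexp : (x * s - star y * s) * (s * star x - s * y)
      = (x * p * star x + star y * p * y) - (x * p * y + star y * p * star x) := by
    rw [← hss]; noncomm_ring
  rw [hexp] at h0
  exact sub_nonneg.mp h0

lemma algebraMap_nonneg' {c : ℝ} (hc : 0 ≤ c) : (0 : A) ≤ algebraMap ℝ A c := by
  have h : algebraMap ℝ A c = star (algebraMap ℝ A (Real.sqrt c)) * algebraMap ℝ A (Real.sqrt c) := by
    rw [IsSelfAdjoint.star_eq (IsSelfAdjoint.algebraMap A (star_trivial _)), ← map_mul,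
      Real.mul_self_sqrt hc]
  rw [h]; exact star_mul_self_nonneg _

end Aux

/-- Let `A` be a unital C*-algebra with a discrete group `Γ` acting by
*-automorphisms `α`. Then `A` has no nontrivial `α`-invariant closed two-sided ideal if
and only if for every nonzero positive `a ∈ A` there are `t₁,…,t_m ∈ Γ` and
`z₁,…,z_m ∈ A` with `∑ zⱼ α_{tⱼ}(a) zⱼ* ≥ 1`. -/
theorem gammaSimple_iff_filling {Γ A : Type*} [Group Γ] [CStarAlgebra A]
    [PartialOrder A] [StarOrderedRing A]
    (α : Γ → A ≃⋆ₐ[ℂ] A) (hα : ∀ (s t : Γ) (x : A), α (s * t) x = α s (α t x)) :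
    (¬ ∃ I : TwoSidedIdeal A, IsClosed (I : Set A) ∧ I ≠ ⊥ ∧ I ≠ ⊤ ∧
        ∀ s : Γ, (α s) '' (I : Set A) = I) ↔
      (∀ a : A, 0 ≤ a → a ≠ 0 →
        ∃ (m : ℕ) (t : Fin m → Γ) (z : Fin m → A),
          1 ≤ ∑ j, z j * α (t j) a * star (z j)) := by
  have halpha_one : ∀ x : A, α 1 x = x := by
    intro x
    have h := hα 1 1 x
    rw [one_mul] at h
    exact ((α 1).injective h.symm)
  have hcont : ∀ s : Γ, Continuous (α s) := fun s =>
    (NonUnitalStarAlgHom.isometry (α s) (α s).injective).continuous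
  have hinv : ∀ (s : Γ) (x : A), α s (α s⁻¹ x) = x := by
    intro s x
    rw [← hα, mul_inv_cancel, halpha_one]
  have hpos : ∀ (s : Γ) (a : A), 0 ≤ a → 0 ≤ α s a := by
    intro s a ha
    have hss : CFC.sqrt a * CFC.sqrt a = a := CFC.sqrt_mul_sqrt_self a ha
    have hsa : IsSelfAdjoint (CFC.sqrt a) := IsSelfAdjoint.of_nonneg (CFC.sqrt_nonneg a)
    have : α s a = star (α s (CFC.sqrt a)) * α s (CFC.sqrt a) := by
      rw [← map_star, hsa.star_eq, ← map_mul, hss]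
    rw [this]
    exact star_mul_self_nonneg _
  constructor
  · -- forward direction
    intro hsimple a ha hane
    -- the set of finite sums ∑ x_j α_{t_j}(a) y_j
    set J : Set A := {b | ∃ (m : ℕ) (t : Fin m → Γ) (x y : Fin m → A),
      b = ∑ j, x j * α (t j) a * y j} with hJ
    have hzero : (0 : A) ∈ J := ⟨0, Fin.elim0, Fin.elim0, Fin.elim0, by simp⟩
    have hadd : ∀ {b c : A}, b ∈ J → c ∈ J → b + c ∈ J := by
      rintro b c ⟨m, t, x, y, rfl⟩ ⟨n, t', x', y', rfl⟩
      refine ⟨m + n, Fin.append t t', Fin.append x x', Fin.append y y', ?_⟩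
      rw [Fin.sum_univ_add]
      simp [Fin.append_left, Fin.append_right]
    have hneg : ∀ {b : A}, b ∈ J → -b ∈ J := by
      rintro b ⟨m, t, x, y, rfl⟩
      exact ⟨m, t, fun j => -x j, y, by simp [Finset.sum_neg_distrib, neg_mul]⟩
    have hmull : ∀ {r b : A}, b ∈ J → r * b ∈ J := by
      rintro r b ⟨m, t, x, y, rfl⟩
      refine ⟨m, t, fun j => r * x j, y, ?_⟩
      rw [Finset.mul_sum]
      simp [mul_assoc]
    have hmulr : ∀ {b r : A}, b ∈ J → b * r ∈ J := by
      rintro b r ⟨m, t, x, y, rfl⟩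
      refine ⟨m, t, x, fun j => y j * r, ?_⟩
      rw [Finset.sum_mul]
      simp [mul_assoc]
    have hmaps : ∀ s : Γ, Set.MapsTo (α s) J J := by
      rintro s b ⟨m, t, x, y, rfl⟩
      refine ⟨m, fun j => s * t j, fun j => α s (x j), fun j => α s (y j), ?_⟩
      rw [map_sum]
      refine Finset.sum_congr rfl fun j _ => ?_
      rw [map_mul, map_mul, hα]
    have haJ : a ∈ J := by
      refine ⟨1, fun _ => 1, fun _ => 1, fun _ => 1, by simp [halpha_one]⟩
    -- the closure of J
    set C : Set A := closure J with hC
    have hCadd : ∀ {b c : A}, b ∈ C → c ∈ C → b + c ∈ C := by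
      intro b c hb hc
      have hmem : (b, c) ∈ closure (J ×ˢ J) := by
        rw [closure_prod_eq]; exact ⟨hb, hc⟩
      exact map_mem_closure (f := fun p : A × A => p.1 + p.2)
        (continuous_fst.add continuous_snd) hmem
        (fun p hp => hadd hp.1 hp.2)
    have hCneg : ∀ {b : A}, b ∈ C → -b ∈ C :=
      fun hb => map_mem_closure (f := fun y : A => -y) continuous_neg hb fun _ h => hneg h
    have hCmull : ∀ {r b : A}, b ∈ C → r * b ∈ C := fun {r b} hb =>
      map_mem_closure (f := fun y : A => r * y)
        (continuous_const.mul continuous_id) hb fun _ h => hmull h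
    have hCmulr : ∀ {b r : A}, b ∈ C → b * r ∈ C := fun {b r} hb =>
      map_mem_closure (f := fun y : A => y * r)
        (continuous_id.mul continuous_const) hb fun _ h => hmulr h
    have hCmaps : ∀ s : Γ, ∀ x ∈ C, α s x ∈ C := fun s x hx =>
      map_mem_closure (hcont s) hx (hmaps s)
    have hCzero : (0 : A) ∈ C := subset_closure hzero
    set I : TwoSidedIdeal A := TwoSidedIdeal.mk' C hCzero hCadd hCneg hCmull hCmulr with hI
    have hIset : (I : Set A) = C :=
      Set.ext fun b => TwoSidedIdeal.mem_mk' C hCzero hCadd hCneg hCmull hCmulr b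
    have hIclosed : IsClosed (I : Set A) := by rw [hIset]; exact isClosed_closure
    have hIinvar : ∀ s : Γ, (α s) '' (I : Set A) = I := by
      intro s
      rw [hIset]
      apply Set.Subset.antisymm
      · rintro _ ⟨w, hw, rfl⟩
        exact hCmaps s w hw
      · intro w hw
        exact ⟨α s⁻¹ w, hCmaps s⁻¹ w hw, hinv s w⟩
    have haC : a ∈ C := subset_closure haJ
    have hIbot : I ≠ ⊥ := by
      intro hbot
      apply hane
      have : a ∈ I := by rw [SetLike.mem_coe.symm, hIset]; exact haC
      rwa [hbot, TwoSidedIdeal.mem_bot] at this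
    have hItop : I = ⊤ := by
      by_contra htop
      exact hsimple ⟨I, hIclosed, hIbot, htop, hIinvar⟩
    have h1C : (1 : A) ∈ C := by
      rw [← hIset]
      exact I.one_mem (by rw [hItop])
    -- extract an approximant
    rw [hC, Metric.mem_closure_iff] at h1C
    obtain ⟨b, hbJ, hbdist⟩ := h1C (1/2) (by norm_num)
    rw [dist_eq_norm] at hbdist
    obtain ⟨m, t, x, y, rfl⟩ := hbJ
    set b : A := ∑ j, x j * α (t j) a * y j with hb
    set p : Fin m → A := fun j => α (t j) a with hpdef
    have hp : ∀ j, 0 ≤ p j := fun j => hpos (t j) a ha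
    have hpsa : ∀ j, IsSelfAdjoint (p j) := fun j => IsSelfAdjoint.of_nonneg (hp j)
    have hstarb : star b = ∑ j, star (y j) * p j * star (x j) := by
      rw [hb, star_sum]
      refine Finset.sum_congr rfl fun j _ => ?_
      rw [star_mul, star_mul, (hpsa j).star_eq, mul_assoc]
    -- 1 ≤ b + star b
    have hw : IsSelfAdjoint ((1 - b) + (1 - star b)) := by
      rw [IsSelfAdjoint, star_add, star_sub, star_sub, star_one, star_star]
      abel
    have hwnorm : ‖(1 - b) + (1 - star b)‖ < 1 := by
      calc ‖(1 - b) + (1 - star b)‖ ≤ ‖(1 : A) - b‖ + ‖(1 : A) - star b‖ := norm_add_le _ _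
        _ = ‖(1 : A) - b‖ + ‖(1 : A) - b‖ := by
            rw [show (1 : A) - star b = star (1 - b) by rw [star_sub, star_one], norm_star]
        _ < 1 := by linarith
    have hwle : (1 - b) + (1 - star b) ≤ 1 := by
      calc (1 - b) + (1 - star b) ≤ algebraMap ℝ A ‖(1 - b) + (1 - star b)‖ :=
            hw.le_algebraMap_norm_self
        _ ≤ algebraMap ℝ A 1 := by
            rw [← sub_nonneg, ← map_sub]
            exact algebraMap_nonneg' (by linarith)
        _ = 1 := map_one _
    have hd1 : (1 : A) ≤ b + star b := by
      have h := sub_nonneg.mpr hwle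
      rw [show (1:A) - ((1 - b) + (1 - star b)) = b + star b - 1 by abel] at h
      exact sub_nonneg.mp h
    have hde : b + star b ≤ ∑ j, (x j * p j * star (x j) + star (y j) * p j * y j) := by
      rw [hb, hstarb, ← Finset.sum_add_distrib]
      exact Finset.sum_le_sum fun j _ => key_ineq (p j) (x j) (y j) (hp j)
    refine ⟨m + m, Fin.append t t, Fin.append x (fun j => star (y j)), ?_⟩
    rw [Fin.sum_univ_add]
    simp only [Fin.append_left, Fin.append_right, star_star]
    rw [← Finset.sum_add_distrib]
    exact hd1.trans (hde.trans (le_of_eq rfl))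
  · -- backward direction
    intro hfill
    rintro ⟨I, hIc, hIb, hIt, hIinv⟩
    have hx : ∃ x, x ∈ I ∧ x ≠ 0 := by
      by_contra h
      push_neg at h
      refine hIb (SetLike.ext fun x => ?_)
      rw [TwoSidedIdeal.mem_bot]
      exact ⟨fun hx => h x hx, fun hx => hx ▸ I.zero_mem⟩
    obtain ⟨x, hxI, hxne⟩ := hx
    set a : A := x * star x with ha
    have ha0 : 0 ≤ a := mul_star_self_nonneg x
    have hane : a ≠ 0 := by
      rw [ha, Ne, CStarRing.mul_star_self_eq_zero_iff]; exact hxne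
    have haI : a ∈ I := I.mul_mem_right _ _ hxI
    obtain ⟨m, t, z, hle⟩ := hfill a ha0 hane
    have hsI : (∑ j, z j * α (t j) a * star (z j)) ∈ I := by
      refine Finset.sum_induction _ (· ∈ I) (fun _ _ => I.add_mem) I.zero_mem fun j _ => ?_
      have hmem : α (t j) a ∈ I := by
        have := Set.mem_image_of_mem (α (t j)) (show a ∈ (I : Set A) from haI)
        rwa [hIinv (t j)] at this
      exact I.mul_mem_right _ _ (I.mul_mem_left _ _ hmem)
    have hunit : IsUnit (∑ j, z j * α (t j) a * star (z j)) :=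
      CStarAlgebra.isUnit_of_le 1 hle isStrictlyPositive_one
    obtain ⟨u, hu⟩ := hunit
    have h1 : (1 : A) ∈ I := by
      have : (↑u⁻¹ : A) * (∑ j, z j * α (t j) a * star (z j)) = 1 := by
        rw [← hu]; exact u.inv_mul
      rw [← this]
      exact I.mul_mem_left _ _ hsI
    exact hIt (I.eq_top h1)
end

section
/- Let A be a unital C*-algebra, Γ a discrete group, and α: Γ → Aut(A) an action by *-automorphisms with no α-invariant closed two-sided ideal I satisfying (0) ≠ I ⊊ A. Then for all nonzero positive elements a, b ∈ A there exist t ∈ Γ, w ∈ A and a real number λ > 0 such that w* a w ≠ 0 and α_t(w* a w) ≤ λ·b. -/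
open scoped Topology

private lemma aux_smul_nonneg {A : Type*} [CStarAlgebra A]
    [PartialOrder A] [StarOrderedRing A] {r : ℝ} (hr : 0 ≤ r) {x : A} (hx : 0 ≤ x) :
    0 ≤ r • x := by
  have hs : x = star (CFC.sqrt x) * CFC.sqrt x := by
    rw [(IsSelfAdjoint.of_nonneg (CFC.sqrt_nonneg (a := x))).star_eq, CFC.sqrt_mul_sqrt_self x hx]
  have : r • x = star (Real.sqrt r • CFC.sqrt x) * (Real.sqrt r • CFC.sqrt x) := by
    rw [star_smul, star_trivial, smul_mul_smul_comm, Real.mul_self_sqrt hr, ← hs]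
  rw [this]
  exact star_mul_self_nonneg _

private lemma aux_smul_le_smul {A : Type*} [CStarAlgebra A]
    [PartialOrder A] [StarOrderedRing A] {r : ℝ} (hr : 0 ≤ r) {x y : A} (hxy : x ≤ y) :
    r • x ≤ r • y := by
  have := aux_smul_nonneg hr (sub_nonneg.mpr hxy)
  rw [smul_sub] at this
  exact sub_nonneg.mp this

private lemma aux_sq_le {A : Type*} [CStarAlgebra A]
    [PartialOrder A] [StarOrderedRing A] {b : A} (hb : 0 ≤ b) :
    b * b ≤ ‖b‖ • b := by
  set s := CFC.sqrt b with hs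
  have hssa : IsSelfAdjoint s := IsSelfAdjoint.of_nonneg (CFC.sqrt_nonneg (a := b))
  have hss : s * s = b := CFC.sqrt_mul_sqrt_self b hb
  have h1 : b ≤ algebraMap ℝ A ‖b‖ :=
    IsSelfAdjoint.le_algebraMap_norm_self (IsSelfAdjoint.of_nonneg hb)
  have h2 := hssa.conjugate_le_conjugate h1
  calc b * b = s * b * s := by rw [← hss]; noncomm_ring
    _ ≤ s * algebraMap ℝ A ‖b‖ * s := h2
    _ = ‖b‖ • b := by
        rw [Algebra.algebraMap_eq_smul_one, mul_smul_comm, mul_one, smul_mul_assoc, hss]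

set_option maxHeartbeats 1000000 in
/-- Let `A` be a unital C*-algebra with a discrete group `Γ` acting by
*-automorphisms `α`, admitting no nontrivial `α`-invariant closed two-sided ideal. Then
for all nonzero positive `a, b ∈ A` there exist `t ∈ Γ`, `w ∈ A` and `λ > 0` with
`w* a w ≠ 0` and `α_t(w* a w) ≤ λ • b`. -/
theorem transitive_of_gammaSimple {Γ A : Type*} [Group Γ] [CStarAlgebra A]
    [PartialOrder A] [StarOrderedRing A]
    (α : Γ → A ≃⋆ₐ[ℂ] A) (hα : ∀ (s t : Γ) (x : A), α (s * t) x = α s (α t x))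
    (hsimple : ¬ ∃ I : TwoSidedIdeal A, IsClosed (I : Set A) ∧ I ≠ ⊥ ∧ I ≠ ⊤ ∧
        ∀ s : Γ, (α s) '' (I : Set A) = I) :
    ∀ a b : A, 0 ≤ a → a ≠ 0 → 0 ≤ b → b ≠ 0 →
      ∃ (t : Γ) (w : A) (l : ℝ), 0 < l ∧ star w * a * w ≠ 0 ∧
        α t (star w * a * w) ≤ l • b := by
  intro a b ha hane hb hbne
  have hα1 : ∀ x : A, α 1 x = x := by
    intro x
    have h := hα 1 1 x
    rw [one_mul] at h
    exact ((α 1).injective h).symm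
  have hαinv : ∀ (t : Γ) (x : A), α t (α t⁻¹ x) = x := by
    intro t x
    rw [← hα, mul_inv_cancel, hα1]
  -- the set of "orbit ideal" generators
  set S : Set A := {z | ∃ (t : Γ) (x y : A), x * α t a * y = z} with hS
  set M : Submodule ℂ A := Submodule.span ℂ S with hM
  set C : Set A := closure (M : Set A) with hC
  have hMC : (M.topologicalClosure : Set A) = C := M.topologicalClosure_coe
  -- S is stable under left/right multiplication and under each α s
  have hSl : ∀ (x : A), ∀ z ∈ S, x * z ∈ S := by
    rintro x z ⟨t, u, v, rfl⟩
    exact ⟨t, x * u, v, by noncomm_ring⟩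
  have hSr : ∀ (x : A), ∀ z ∈ S, z * x ∈ S := by
    rintro x z ⟨t, u, v, rfl⟩
    exact ⟨t, u, v * x, by noncomm_ring⟩
  have hSα : ∀ (s : Γ), ∀ z ∈ S, α s z ∈ S := by
    rintro s z ⟨t, u, v, rfl⟩
    exact ⟨s * t, α s u, α s v, by rw [hα s t a, map_mul, map_mul]⟩
  -- corresponding facts for M
  have hMl : ∀ (x : A), ∀ z ∈ M, x * z ∈ M := by
    intro x z hz
    induction hz using Submodule.span_induction with
    | mem w hw => exact Submodule.subset_span (hSl x w hw)
    | zero => simpa using Submodule.zero_mem M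
    | add u v _ _ hu hv => rw [mul_add]; exact Submodule.add_mem M hu hv
    | smul c u _ hu => rw [mul_smul_comm]; exact Submodule.smul_mem M c hu
  have hMr : ∀ (x : A), ∀ z ∈ M, z * x ∈ M := by
    intro x z hz
    induction hz using Submodule.span_induction with
    | mem w hw => exact Submodule.subset_span (hSr x w hw)
    | zero => simpa using Submodule.zero_mem M
    | add u v _ _ hu hv => rw [add_mul]; exact Submodule.add_mem M hu hv
    | smul c u _ hu => rw [smul_mul_assoc]; exact Submodule.smul_mem M c hu
  have hMα : ∀ (s : Γ), ∀ z ∈ M, α s z ∈ M := by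
    intro s z hz
    induction hz using Submodule.span_induction with
    | mem w hw => exact Submodule.subset_span (hSα s w hw)
    | zero => simpa using Submodule.zero_mem M
    | add u v _ _ hu hv => rw [map_add]; exact Submodule.add_mem M hu hv
    | smul c u _ hu => rw [map_smul]; exact Submodule.smul_mem M c hu
  -- corresponding facts for C
  have hCl : ∀ (x : A), ∀ z ∈ C, x * z ∈ C := by
    intro x z hz
    have h1 : x * z ∈ (fun w => x * w) '' closure (M : Set A) := ⟨z, hz, rfl⟩
    have h2 := image_closure_subset_closure_image (f := fun w => x * w)
      (s := (M : Set A)) (continuous_const.mul continuous_id)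
    have h3 : (fun w => x * w) '' (M : Set A) ⊆ (M : Set A) := by
      rintro _ ⟨u, hu, rfl⟩; exact hMl x u hu
    exact closure_mono h3 (h2 h1)
  have hCr : ∀ (x : A), ∀ z ∈ C, z * x ∈ C := by
    intro x z hz
    have h1 : z * x ∈ (fun w => w * x) '' closure (M : Set A) := ⟨z, hz, rfl⟩
    have h2 := image_closure_subset_closure_image (f := fun w => w * x)
      (s := (M : Set A)) (continuous_id.mul continuous_const)
    have h3 : (fun w => w * x) '' (M : Set A) ⊆ (M : Set A) := by
      rintro _ ⟨u, hu, rfl⟩; exact hMr x u hu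
    exact closure_mono h3 (h2 h1)
  have hCα : ∀ (s : Γ), ∀ z ∈ C, α s z ∈ C := by
    intro s z hz
    have h1 : α s z ∈ (α s) '' closure (M : Set A) := ⟨z, hz, rfl⟩
    have h2 := image_closure_subset_closure_image (f := (α s : A → A))
      (s := (M : Set A)) (StarAlgEquiv.isometry (α s)).continuous
    have h3 : (α s) '' (M : Set A) ⊆ (M : Set A) := by
      rintro _ ⟨u, hu, rfl⟩; exact hMα s u hu
    exact closure_mono h3 (h2 h1)
  -- build the two-sided ideal
  set I : TwoSidedIdeal A := TwoSidedIdeal.mk' C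
    (by rw [← hMC]; exact M.topologicalClosure.zero_mem)
    (fun {x y} hx hy => by
      rw [← hMC] at hx hy ⊢; exact M.topologicalClosure.add_mem hx hy)
    (fun {x} hx => by rw [← hMC] at hx ⊢; exact M.topologicalClosure.neg_mem hx)
    (fun {x y} hy => hCl x y hy)
    (fun {x y} hx => hCr y x hx) with hI
  have hmemI : ∀ x : A, x ∈ I ↔ x ∈ C := fun x => TwoSidedIdeal.mem_mk' _ _ _ _ _ _ x
  have hcoeI : (I : Set A) = C := TwoSidedIdeal.coe_mk' _ _ _ _ _ _
  have haS : a ∈ S := ⟨1, 1, 1, by rw [hα1, one_mul, mul_one]⟩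
  have haC : a ∈ C := subset_closure (Submodule.subset_span haS)
  have hIbot : I ≠ ⊥ := by
    intro h
    have : a ∈ I := (hmemI a).mpr haC
    rw [h, TwoSidedIdeal.mem_bot] at this
    exact hane this
  have hCinv : ∀ s : Γ, (α s) '' C = C := by
    intro s
    apply Set.Subset.antisymm
    · rintro _ ⟨z, hz, rfl⟩; exact hCα s z hz
    · intro z hz
      exact ⟨α s⁻¹ z, hCα s⁻¹ z hz, hαinv s z⟩
  have hItop : I = ⊤ := by
    by_contra h
    exact hsimple ⟨I, by rw [hcoeI]; exact isClosed_closure, hIbot, h,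
      fun s => by rw [hcoeI]; exact hCinv s⟩
  have h1C : (1 : A) ∈ C := by
    have : (1 : A) ∈ I := by rw [hItop]; exact TwoSidedIdeal.mem_top A
    exact (hmemI 1).mp this
  -- b is self-adjoint
  have hbsa : IsSelfAdjoint b := IsSelfAdjoint.of_nonneg hb
  -- find a generator z ∈ S with b * z * b ≠ 0
  have hkey : ∃ (t : Γ) (x y : A), b * (x * α t a * y) * b ≠ 0 := by
    by_contra h
    push_neg at h
    have hMz : ∀ u ∈ M, b * u * b = 0 := by
      intro u hu
      induction hu using Submodule.span_induction with
      | mem w hw => obtain ⟨t, x, y, rfl⟩ := hw; exact h t x y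
      | zero => simp
      | add u v _ _ hu hv => rw [mul_add, add_mul, hu, hv, add_zero]
      | smul c u _ hu => rw [mul_smul_comm, smul_mul_assoc, hu, smul_zero]
    have hCz : ∀ u ∈ C, b * u * b = 0 := by
      intro u hu
      have hcl : IsClosed {u : A | b * u * b = 0} := by
        have : Continuous (fun u : A => b * u * b) := (continuous_const.mul continuous_id).mul continuous_const
        exact isClosed_eq this continuous_const
      exact closure_minimal (fun u hu => hMz u hu) hcl hu
    have : b * 1 * b = 0 := hCz 1 h1C
    rw [mul_one] at this
    exact hbne ((CStarRing.star_mul_self_eq_zero_iff b).mp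
      (by rw [hbsa.star_eq]; exact this))
  obtain ⟨t, x, y, hzne⟩ := hkey
  -- α t a is nonneg
  have hata : 0 ≤ α t a := by
    have h1 : a = star (CFC.sqrt a) * CFC.sqrt a := by
      rw [(IsSelfAdjoint.of_nonneg (CFC.sqrt_nonneg (a := a))).star_eq, CFC.sqrt_mul_sqrt_self a ha]
    calc (0 : A) ≤ star (α t (CFC.sqrt a)) * α t (CFC.sqrt a) := star_mul_self_nonneg _
      _ = α t a := by rw [← map_star, ← map_mul, ← h1]
  -- the element yb, with (α t a) * (y*b) ≠ 0
  have hybne : α t a * (y * b) ≠ 0 := by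
    intro h
    apply hzne
    calc b * (x * α t a * y) * b = (b * x) * (α t a * (y * b)) := by noncomm_ring
      _ = 0 := by rw [h, mul_zero]
  set r : A := CFC.sqrt (α t a) with hr
  have hrsa : star r = r := (IsSelfAdjoint.of_nonneg (CFC.sqrt_nonneg (a := α t a))).star_eq
  have hrr : r * r = α t a := CFC.sqrt_mul_sqrt_self _ hata
  have hrybne : r * (y * b) ≠ 0 := by
    intro h
    apply hybne
    rw [← hrr, mul_assoc, h, mul_zero]
  -- the conjugated element
  set d : A := star y * α t a * y with hd
  have hdnn : 0 ≤ d := star_left_conjugate_nonneg hata y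
  have hcne : b * d * b ≠ 0 := by
    have heq : b * d * b = star (r * (y * b)) * (r * (y * b)) := by
      rw [star_mul, hrsa, hd, ← hrr]
      rw [star_mul, hbsa.star_eq]
      noncomm_ring
    rw [heq]
    exact (CStarRing.star_mul_self_ne_zero_iff _).mpr hrybne
  have hdne : d ≠ 0 := by
    intro h; apply hcne; rw [h, mul_zero, zero_mul]
  -- the witness
  refine ⟨t, α t⁻¹ (y * b), ‖d‖ * ‖b‖,
    mul_pos (norm_pos_iff.mpr hdne) (norm_pos_iff.mpr hbne), ?_, ?_⟩
  · intro h
    have h1 := congrArg (α t) h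
    rw [map_mul, map_mul, map_star, hαinv, map_zero] at h1
    apply hcne
    have h2 : star (y * b) * α t a * (y * b) = b * d * b := by
      rw [star_mul, hbsa.star_eq, hd]; noncomm_ring
    rw [← h2]; exact h1
  · have hmap : α t (star (α t⁻¹ (y * b)) * a * α t⁻¹ (y * b)) = b * d * b := by
      rw [map_mul, map_mul, map_star, hαinv, star_mul, hbsa.star_eq, hd]
      noncomm_ring
    rw [hmap]
    have h1 : d ≤ algebraMap ℝ A ‖d‖ :=
      IsSelfAdjoint.le_algebraMap_norm_self (IsSelfAdjoint.of_nonneg hdnn)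
    calc b * d * b ≤ b * algebraMap ℝ A ‖d‖ * b := hbsa.conjugate_le_conjugate h1
      _ = ‖d‖ • (b * b) := by
          rw [Algebra.algebraMap_eq_smul_one, mul_smul_comm, mul_one, smul_mul_assoc]
      _ ≤ ‖d‖ • (‖b‖ • b) := aux_smul_le_smul (norm_nonneg d) (aux_sq_le hb)
      _ = (‖d‖ * ‖b‖) • b := by rw [mul_smul]
end

section
/- Let X be a topological space and let E₁,…,E_n and F₁,…,F_m be clopen subsets of X such that Σ_{j=1}^n 1_{E_j} = Σ_{i=1}^m 1_{F_i} as integer-valued functions on X. Then there exist r ∈ ℕ, clopen sets C₁,…,C_r ⊆ X and indices n₁,…,n_r ∈ {1,…,n} and m₁,…,m_r ∈ {1,…,m} such that the sets C_k × {n_k} (k = 1,…,r) are pairwise disjoint with union ⋃_{j=1}^n E_j × {j} ⊆ X × ℕ, and the sets C_k × {m_k} (k = 1,…,r) are pairwise disjoint with union ⋃_{i=1}^m F_i × {i} ⊆ X × ℕ. -/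
open Set

section Helpers

variable {α β : Type*}

lemma prod_singleton_disjoint_of_ne (A B : Set α) {a b : β} (h : a ≠ b) :
    Disjoint (A ×ˢ ({a} : Set β)) (B ×ˢ ({b} : Set β)) := by
  rw [Set.disjoint_left]
  rintro ⟨x, y⟩ ⟨-, hy⟩ ⟨-, hy'⟩
  simp only [Set.mem_singleton_iff] at hy hy'
  exact h (hy ▸ hy')

lemma prod_singleton_disjoint_of_disjoint {A B : Set α} (h : Disjoint A B) (a b : β) :
    Disjoint (A ×ˢ ({a} : Set β)) (B ×ˢ ({b} : Set β)) := by
  rw [Set.disjoint_left] at h ⊢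
  rintro ⟨x, y⟩ ⟨hx, -⟩ ⟨hx', -⟩
  exact h hx hx'

lemma iUnion_append {r s : ℕ} (f : Fin r → Set α) (g : Fin s → Set α) :
    (⋃ k, Fin.append f g k) = (⋃ k, f k) ∪ ⋃ k, g k := by
  ext x
  simp only [Set.mem_iUnion, Set.mem_union]
  constructor
  · rintro ⟨k, hk⟩
    induction k using Fin.addCases with
    | left k => rw [Fin.append_left] at hk; exact Or.inl ⟨k, hk⟩
    | right k => rw [Fin.append_right] at hk; exact Or.inr ⟨k, hk⟩
  · rintro (⟨k, hk⟩ | ⟨k, hk⟩)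
    · exact ⟨Fin.castAdd _ k, by rwa [Fin.append_left]⟩
    · exact ⟨Fin.natAdd _ k, by rwa [Fin.append_right]⟩

lemma iUnion_fin_succ {n : ℕ} (f : Fin (n + 1) → Set α) :
    (⋃ j, f j) = (⋃ j : Fin n, f j.castSucc) ∪ f (Fin.last n) := by
  ext x
  simp only [Set.mem_iUnion, Set.mem_union]
  constructor
  · rintro ⟨j, hj⟩
    induction j using Fin.lastCases with
    | last => exact Or.inr hj
    | cast j => exact Or.inl ⟨j, hj⟩
  · rintro (⟨j, hj⟩ | hj)
    · exact ⟨j.castSucc, hj⟩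
    · exact ⟨Fin.last n, hj⟩

lemma sum_indicator_disjoint {ι : Type*} [Fintype ι] (D : ι → Set α)
    (hd : ∀ i j, i ≠ j → Disjoint (D i) (D j)) (x : α) :
    ∑ i, (D i).indicator (fun _ => (1 : ℤ)) x = (⋃ i, D i).indicator (fun _ => (1 : ℤ)) x := by
  by_cases hx : x ∈ ⋃ i, D i
  · obtain ⟨i₀, hi₀⟩ := Set.mem_iUnion.mp hx
    rw [Set.indicator_of_mem hx]
    rw [Finset.sum_eq_single i₀]
    · exact Set.indicator_of_mem hi₀ _
    · intro j _ hj
      exact Set.indicator_of_notMem (fun hxj => (hd j i₀ hj).le_bot ⟨hxj, hi₀⟩) _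
    · exact fun h => absurd (Finset.mem_univ i₀) h
  · rw [Set.indicator_of_notMem hx]
    refine Finset.sum_eq_zero fun i _ => ?_
    exact Set.indicator_of_notMem (fun h => hx (Set.mem_iUnion.mpr ⟨i, h⟩)) _

end Helpers

/-- If `E₁,…,E_n` and `F₁,…,F_m` are clopen subsets of a topological space
`X` with `∑ 1_{Eⱼ} = ∑ 1_{F_i}` as integer-valued functions, then there is a common clopen
refinement: clopen sets `C₁,…,C_r` with indices `n_k ∈ {1,…,n}`, `m_k ∈ {1,…,m}` such that
the `C_k × {n_k}` are pairwise disjoint with union `⋃ⱼ Eⱼ × {j}`, and the `C_k × {m_k}`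
are pairwise disjoint with union `⋃ᵢ F_i × {i}`. -/
theorem clopen_refinement {X : Type*} [TopologicalSpace X] (n m : ℕ)
    (E : Fin n → Set X) (F : Fin m → Set X)
    (hE : ∀ j, IsClopen (E j)) (hF : ∀ i, IsClopen (F i))
    (hsum : ∀ x : X, ∑ j, (E j).indicator (fun _ => (1 : ℤ)) x =
      ∑ i, (F i).indicator (fun _ => (1 : ℤ)) x) :
    ∃ (r : ℕ) (C : Fin r → Set X) (nk : Fin r → Fin n) (mk : Fin r → Fin m),
      (∀ k, IsClopen (C k)) ∧
      (∀ k k' : Fin r, k ≠ k' →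
        Disjoint (C k ×ˢ ({(nk k : ℕ)} : Set ℕ)) (C k' ×ˢ ({(nk k' : ℕ)} : Set ℕ))) ∧
      (⋃ k, C k ×ˢ ({(nk k : ℕ)} : Set ℕ)) = (⋃ j, E j ×ˢ ({(j : ℕ)} : Set ℕ)) ∧
      (∀ k k' : Fin r, k ≠ k' →
        Disjoint (C k ×ˢ ({(mk k : ℕ)} : Set ℕ)) (C k' ×ˢ ({(mk k' : ℕ)} : Set ℕ))) ∧
      (⋃ k, C k ×ˢ ({(mk k : ℕ)} : Set ℕ)) = (⋃ i, F i ×ˢ ({(i : ℕ)} : Set ℕ)) := by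
  induction n generalizing F with
  | zero =>
    have hFempty : ∀ i, F i = ∅ := by
      intro i
      ext x
      simp only [Set.mem_empty_iff_false, iff_false]
      intro hx
      have h1 : (0 : ℤ) = ∑ i, (F i).indicator (fun _ => (1 : ℤ)) x := by
        simpa using hsum x
      have h2 : (F i).indicator (fun _ => (1 : ℤ)) x ≤
          ∑ i, (F i).indicator (fun _ => (1 : ℤ)) x :=
        Finset.single_le_sum (fun j _ => Set.indicator_nonneg (fun _ _ => zero_le_one) x)
          (Finset.mem_univ i)
      rw [Set.indicator_of_mem hx] at h2
      omega
    refine ⟨0, Fin.elim0, Fin.elim0, Fin.elim0, fun k => k.elim0, fun k => k.elim0,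
      ?_, fun k => k.elim0, ?_⟩
    · simp
    · simp [hFempty]
  | succ n ih =>
    classical
    set D : Fin m → Set X :=
      fun i => E (Fin.last n) ∩ F i ∩ ⋂ i' ∈ Finset.Iio i, (F i')ᶜ with hDdef
    have hDclopen : ∀ i, IsClopen (D i) := fun i =>
      ((hE _).inter (hF i)).inter (isClopen_biInter_finset fun i' _ => (hF i').compl)
    have hDsub : ∀ i, D i ⊆ F i := fun i x hx => hx.1.2
    have hDsubL : ∀ i, D i ⊆ E (Fin.last n) := fun i x hx => hx.1.1
    have hDdisj : ∀ i j, i ≠ j → Disjoint (D i) (D j) := by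
      have key : ∀ i j, i < j → Disjoint (D i) (D j) := by
        intro i j hij
        rw [Set.disjoint_left]
        intro x hxi hxj
        have hxnotFi : x ∈ (F i)ᶜ := by
          have := hxj.2
          rw [Set.mem_iInter₂] at this
          exact this i (Finset.mem_Iio.mpr hij)
        exact hxnotFi hxi.1.2
      intro i j hij
      rcases lt_or_gt_of_ne hij with h | h
      · exact key i j h
      · exact (key j i h).symm
    have hDunion : (⋃ i, D i) = E (Fin.last n) := by
      apply Set.Subset.antisymm
      · exact Set.iUnion_subset hDsubL
      · intro x hx
        set s : Finset (Fin m) := Finset.univ.filter fun i => x ∈ F i with hs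
        have hsne : s.Nonempty := by
          by_contra hne
          have hall : ∀ i, x ∉ F i := by
            intro i hxi
            exact hne ⟨i, Finset.mem_filter.mpr ⟨Finset.mem_univ i, hxi⟩⟩
          have h0 : ∑ i, (F i).indicator (fun _ => (1 : ℤ)) x = 0 :=
            Finset.sum_eq_zero fun i _ => Set.indicator_of_notMem (hall i) _
          have h1 : (E (Fin.last n)).indicator (fun _ => (1 : ℤ)) x ≤
              ∑ j, (E j).indicator (fun _ => (1 : ℤ)) x :=
            Finset.single_le_sum
              (fun j _ => Set.indicator_nonneg (fun _ _ => zero_le_one) x)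
              (Finset.mem_univ _)
          rw [Set.indicator_of_mem hx] at h1
          rw [hsum x, h0] at h1
          omega
        set i₀ := s.min' hsne with hi₀
        rw [Set.mem_iUnion]
        refine ⟨i₀, ?_⟩
        simp only [hDdef]
        refine ⟨⟨hx, ?_⟩, ?_⟩
        · exact (Finset.mem_filter.mp (s.min'_mem hsne)).2
        · rw [Set.mem_iInter₂]
          intro i' hi'
          rw [Finset.mem_Iio] at hi'
          intro hxi'
          have : i₀ ≤ i' := s.min'_le i' (Finset.mem_filter.mpr ⟨Finset.mem_univ _, hxi'⟩)
          exact absurd hi' (not_lt.mpr this)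
    have hsum' : ∀ x : X, ∑ j : Fin n, (E j.castSucc).indicator (fun _ => (1 : ℤ)) x =
        ∑ i, ((F i \ D i)).indicator (fun _ => (1 : ℤ)) x := by
      intro x
      have hterm : ∀ i, (F i \ D i).indicator (fun _ => (1 : ℤ)) x =
          (F i).indicator (fun _ => (1 : ℤ)) x - (D i).indicator (fun _ => (1 : ℤ)) x := by
        intro i
        by_cases hD : x ∈ D i
        · rw [Set.indicator_of_notMem (fun h => h.2 hD), Set.indicator_of_mem (hDsub i hD),
            Set.indicator_of_mem hD]
          ring
        · by_cases hFi : x ∈ F i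
          · have hmem : x ∈ F i \ D i := ⟨hFi, hD⟩
            rw [Set.indicator_of_mem hmem, Set.indicator_of_mem hFi,
              Set.indicator_of_notMem hD]
            ring
          · rw [Set.indicator_of_notMem (fun h => hFi h.1), Set.indicator_of_notMem hFi,
              Set.indicator_of_notMem hD]
            ring
      rw [Finset.sum_congr rfl (fun i _ => hterm i), Finset.sum_sub_distrib,
        sum_indicator_disjoint D hDdisj x, hDunion, ← hsum x, Fin.sum_univ_castSucc]
      ring
    obtain ⟨r, C, nk, mk, hC, hdE, huE, hdF, huF⟩ :=
      ih (fun j => E j.castSucc) (fun i => F i \ D i) (fun j => hE _)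
        (fun i => (hF i).diff (hDclopen i)) hsum'
    have hCk_sub : ∀ k, C k ⊆ F (mk k) \ D (mk k) := by
      intro k x hx
      have hmem : ((x, (mk k : ℕ)) : X × ℕ) ∈ ⋃ k, C k ×ˢ ({(mk k : ℕ)} : Set ℕ) :=
        Set.mem_iUnion.mpr ⟨k, ⟨hx, rfl⟩⟩
      rw [huF] at hmem
      obtain ⟨i, hxi, hival⟩ := Set.mem_iUnion.mp hmem
      have hval : (mk k : ℕ) = (i : ℕ) := by simpa using hival
      have : mk k = i := Fin.val_injective hval
      exact this ▸ hxi
    refine ⟨r + m, Fin.append C D,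
      Fin.append (fun k => (nk k).castSucc) (fun _ => Fin.last n),
      Fin.append mk (fun i => i), ?_, ?_, ?_, ?_, ?_⟩
    · intro k
      induction k using Fin.addCases with
      | left k => rw [Fin.append_left]; exact hC k
      | right i => rw [Fin.append_right]; exact hDclopen i
    · intro k k' hne
      induction k using Fin.addCases with
      | left k =>
        induction k' using Fin.addCases with
        | left k' =>
          simp only [Fin.append_left, Fin.coe_castSucc]
          exact hdE k k' (fun h => hne (by rw [h]))
        | right i' =>
          simp only [Fin.append_left, Fin.append_right]
          exact prod_singleton_disjoint_of_ne _ _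
            (by simp only [Fin.coe_castSucc, Fin.val_last]; exact (nk k).isLt.ne)
      | right i =>
        induction k' using Fin.addCases with
        | left k' =>
          simp only [Fin.append_left, Fin.append_right]
          exact (prod_singleton_disjoint_of_ne _ _
            (by simp only [Fin.coe_castSucc, Fin.val_last]; exact (nk k').isLt.ne)).symm
        | right i' =>
          simp only [Fin.append_right]
          exact prod_singleton_disjoint_of_disjoint
            (hDdisj i i' (fun h => hne (by rw [h]))) _ _
    · have hfun : (fun k : Fin (r + m) => Fin.append C D k ×ˢ
          ({((Fin.append (fun k => (nk k).castSucc) (fun _ => Fin.last n) k : Fin (n+1)) : ℕ)} : Set ℕ)) =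
          Fin.append (fun k => C k ×ˢ ({(nk k : ℕ)} : Set ℕ))
            (fun i => D i ×ˢ ({(n : ℕ)} : Set ℕ)) := by
        funext k
        induction k using Fin.addCases with
        | left k => simp [Fin.append_left]
        | right i => simp [Fin.append_right]
      rw [show (⋃ k, Fin.append C D k ×ˢ
          ({((Fin.append (fun k => (nk k).castSucc) (fun _ => Fin.last n) k : Fin (n+1)) : ℕ)} : Set ℕ)) =
          ⋃ k, Fin.append (fun k => C k ×ˢ ({(nk k : ℕ)} : Set ℕ))
            (fun i => D i ×ˢ ({(n : ℕ)} : Set ℕ)) k from by rw [hfun]]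
      rw [iUnion_append, iUnion_fin_succ (fun j => E j ×ˢ ({(j : ℕ)} : Set ℕ))]
      congr 1
      rw [← Set.iUnion_prod_const, hDunion]
      rfl
    · intro k k' hne
      induction k using Fin.addCases with
      | left k =>
        induction k' using Fin.addCases with
        | left k' =>
          simp only [Fin.append_left]
          exact hdF k k' (fun h => hne (by rw [h]))
        | right i' =>
          simp only [Fin.append_left, Fin.append_right]
          by_cases h : mk k = i'
          · exact prod_singleton_disjoint_of_disjoint
              (Set.disjoint_left.mpr fun x hx hx2 => (hCk_sub k hx).2 (h ▸ hx2)) _ _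
          · exact prod_singleton_disjoint_of_ne _ _ (fun hv => h (Fin.val_injective hv))
      | right i =>
        induction k' using Fin.addCases with
        | left k' =>
          simp only [Fin.append_left, Fin.append_right]
          by_cases h : mk k' = i
          · exact (prod_singleton_disjoint_of_disjoint
              (Set.disjoint_left.mpr fun x hx hx2 => (hCk_sub k' hx).2 (h ▸ hx2)) _ _).symm
          · exact (prod_singleton_disjoint_of_ne _ _
              (fun hv => h (Fin.val_injective hv))).symm
        | right i' =>
          simp only [Fin.append_right]
          exact prod_singleton_disjoint_of_disjoint
            (hDdisj i i' (fun h => hne (by rw [h]))) _ _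
    · have hfun : (fun k : Fin (r + m) => Fin.append C D k ×ˢ
          ({((Fin.append mk (fun i => i) k : Fin m) : ℕ)} : Set ℕ)) =
          Fin.append (fun k => C k ×ˢ ({(mk k : ℕ)} : Set ℕ))
            (fun i => D i ×ˢ ({(i : ℕ)} : Set ℕ)) := by
        funext k
        induction k using Fin.addCases with
        | left k => simp [Fin.append_left]
        | right i => simp [Fin.append_right]
      rw [show (⋃ k, Fin.append C D k ×ˢ
          ({((Fin.append mk (fun i => i) k : Fin m) : ℕ)} : Set ℕ)) =
          ⋃ k, Fin.append (fun k => C k ×ˢ ({(mk k : ℕ)} : Set ℕ))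
            (fun i => D i ×ˢ ({(i : ℕ)} : Set ℕ)) k from by rw [hfun]]
      rw [iUnion_append, huF, ← Set.iUnion_union_distrib]
      exact Set.iUnion_congr fun i => by
        rw [← Set.union_prod, Set.diff_union_of_subset (hDsub i)]
end
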